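/- arXiv:2407.03539 — 4 statements merged into one kernel-verified Lean document; each statement's English description precedes it below -/
import Mathlib

section
/- Let J ≥ 1, let γ ∈ (0,1), and let q_y > 0 for every nonzero profile y ∈ {0,1}^J \ {0}. If the no-highest-order-interaction equation ∑_{y ≠ 0} (−1)^{J + |y|} log(q_y · γ) + (−1)^J log(1 − γ) = 0 holds, then 1/γ = 1 + exp(S(q)), where S(q) = ∑_{y ≠ 0} (−1)^{|y|+1} log q_y. -/
open Finset

lemma key_sum (J : ℕ) (hJ : 1 ≤ J) :
    ∑ y : Fin J → Bool, (-1 : ℝ) ^ ((Finset.univ.filter (fun k => y k = true)).card) = 0 := by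
  have h1 : ∀ y : Fin J → Bool,
      (-1 : ℝ) ^ ((Finset.univ.filter (fun k => y k = true)).card)
        = ∏ k : Fin J, (if y k = true then (-1 : ℝ) else 1) := by
    intro y
    rw [Finset.prod_ite, Finset.prod_const, Finset.prod_const, one_pow, mul_one]
  simp_rw [h1]
  rw [← Fintype.prod_sum (fun (_ : Fin J) (b : Bool) => if b = true then (-1 : ℝ) else 1)]
  have : ∀ k : Fin J, (∑ b : Bool, if b = true then (-1 : ℝ) else 1) = 0 := by simp
  rw [Finset.prod_congr rfl (fun k _ => this k), Finset.prod_const, zero_pow]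
  rw [Finset.card_univ, Fintype.card_fin]; omega

lemma key_sum' (J : ℕ) (hJ : 1 ≤ J) :
    ∑ y ∈ Finset.univ.filter (fun y : Fin J → Bool => y ≠ fun _ => false),
      (-1 : ℝ) ^ ((Finset.univ.filter (fun k => y k = true)).card) = -1 := by
  have h0 := key_sum J hJ
  rw [← Finset.sum_filter_add_sum_filter_not Finset.univ
      (fun y : Fin J → Bool => y ≠ fun _ => false)] at h0
  have h2 : Finset.univ.filter (fun y : Fin J → Bool => ¬ y ≠ fun _ => false)
      = {fun _ => false} := by
    ext y; simp
  rw [h2, Finset.sum_singleton] at h0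
  simp only [Finset.filter_congr_decidable] at h0 ⊢
  have h3 : (Finset.univ.filter (fun k : Fin J => (fun _ => false) k = true)).card = 0 := by
    simp
  rw [h3, pow_zero] at h0
  linarith

/-- if the no-highest-order-interaction equation
`∑_{y ≠ 0} (−1)^{J+|y|} log(q_y γ) + (−1)^J log(1−γ) = 0` holds, then
`1/γ = 1 + exp(∑_{y ≠ 0} (−1)^{|y|+1} log q_y)`. -/
theorem stmt_2 (J : ℕ) (hJ : 1 ≤ J) (γ : ℝ) (hγ0 : 0 < γ) (hγ1 : γ < 1)
    (q : (Fin J → Bool) → ℝ)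
    (hq : ∀ y : Fin J → Bool, y ≠ (fun _ => false) → 0 < q y)
    (h : ∑ y ∈ Finset.univ.filter (fun y : Fin J → Bool => y ≠ fun _ => false),
          (-1 : ℝ) ^ (J + (Finset.univ.filter (fun k => y k = true)).card)
            * Real.log (q y * γ)
        + (-1 : ℝ) ^ J * Real.log (1 - γ) = 0) :
    1 / γ = 1 + Real.exp (∑ y ∈ Finset.univ.filter (fun y : Fin J → Bool => y ≠ fun _ => false),
      (-1 : ℝ) ^ ((Finset.univ.filter (fun k => y k = true)).card + 1) * Real.log (q y)) := by
  set s := Finset.univ.filter (fun y : Fin J → Bool => y ≠ fun _ => false) with hs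
  set A : ℝ := ∑ y ∈ s, (-1 : ℝ) ^ ((Finset.univ.filter (fun k => y k = true)).card)
      * Real.log (q y) with hA
  have hmem : ∀ y ∈ s, y ≠ (fun _ : Fin J => false) := by
    intro y hy; simpa [hs] using hy
  have hsplit : ∀ y ∈ s,
      (-1 : ℝ) ^ (J + (Finset.univ.filter (fun k => y k = true)).card)
          * Real.log (q y * γ)
        = (-1 : ℝ) ^ J * ((-1 : ℝ) ^ ((Finset.univ.filter (fun k => y k = true)).card)
            * Real.log (q y)
          + (-1 : ℝ) ^ ((Finset.univ.filter (fun k => y k = true)).card) * Real.log γ) := by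
    intro y hy
    rw [Real.log_mul (ne_of_gt (hq y (hmem y hy))) (ne_of_gt hγ0), pow_add]
    ring
  rw [Finset.sum_congr rfl hsplit, ← Finset.mul_sum, Finset.sum_add_distrib,
      ← Finset.sum_mul] at h
  rw [key_sum' J hJ] at h
  have hJne : ((-1 : ℝ) ^ J) ≠ 0 := pow_ne_zero J (by norm_num)
  have h2 : (-1 : ℝ) ^ J * (A - Real.log γ + Real.log (1 - γ)) = 0 := by
    linear_combination h
  have h3 : A - Real.log γ + Real.log (1 - γ) = 0 :=
    (mul_eq_zero.mp h2).resolve_left hJne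
  have hS : (∑ y ∈ s, (-1 : ℝ) ^ ((Finset.univ.filter (fun k => y k = true)).card + 1)
      * Real.log (q y)) = -A := by
    rw [hA, ← Finset.sum_neg_distrib]
    exact Finset.sum_congr rfl fun y _ => by ring
  rw [hS]
  have hexp : Real.exp (-A) = (1 - γ) / γ := by
    have hlog : -A = Real.log ((1 - γ) / γ) := by
      rw [Real.log_div (by linarith) (ne_of_gt hγ0)]; linarith
    rw [hlog, Real.exp_log (div_pos (by linarith) hγ0)]
  rw [hexp]
  field_simp
  ring
end

section
/- Let 1 ≤ J ≤ K, let 𝒳 be a finite set, and let (X,Y) be a random pair with distribution Q on 𝒳 × ({0,1}^K \ {0}). Assume q_y(x) := Q(Y = y | X = x) > 0 for every x in the support of X and every profile y = (y_1,…,y_J,0,…,0) with (y_1,…,y_J) ≠ 0. Define 1/γ(x) := 1 + exp( ∑_{(y_1,…,y_J) ≠ 0} (−1)^{|y|+1} log q_y(x) ), 1/ψ := E_Q[1/γ(X)], and φ(x,y) := (1/γ(x) − 1) ∑_{(y'_1,…,y'_J) ≠ 0} (−1)^{|y'|+1} 1(y = y') / q_{y'}(x) + 1 − 1/ψ. Then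 Var_Q(φ(X,Y)) = Var_Q(1/γ(X)) + E_Q[ (1/γ(X) − 1)² ( ∑_{(y_1,…,y_J) ≠ 0} 1/q_y(X) − 1 ) ]. -/
open Finset

/-- The `K`-dimensional capture profile `(z₁, …, z_J, 0, …, 0)`. -/
def extProfile (J K : ℕ) (z : Fin J → Bool) : Fin K → Bool :=
  fun k => if h : (k : ℕ) < J then z ⟨k, h⟩ else false

/-- The set of nonzero capture profiles in `{0,1}^J`. -/
def NZ (J : ℕ) : Finset (Fin J → Bool) :=
  Finset.univ.filter (fun z => z ≠ fun _ => false)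

/-- The number of ones of a binary profile. -/
def wt {n : ℕ} (y : Fin n → Bool) : ℕ := (Finset.univ.filter (fun k => y k = true)).card

/-- The identified inverse conditional capture probability
`1/γ(x) = 1 + exp(∑_{(y₁,…,y_J) ≠ 0} (−1)^{|y|+1} log q_y(x))`. -/
noncomputable def gammaInv (J K : ℕ) (q : (Fin K → Bool) → ℝ) : ℝ :=
  1 + Real.exp (∑ z ∈ NZ J, (-1 : ℝ) ^ (wt z + 1) * Real.log (q (extProfile J K z)))

/-- The uncentered efficient influence function
`(1/γ(x) − 1) ∑_{y' ≠ 0} (−1)^{|y'|+1} 1(y = y')/q_{y'}(x) + 1`. -/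
noncomputable def phiU (J K : ℕ) (q : (Fin K → Bool) → ℝ) (y : Fin K → Bool) : ℝ :=
  (gammaInv J K q - 1) *
      (∑ z ∈ NZ J, (-1 : ℝ) ^ (wt z + 1) *
        (if y = extProfile J K z then (1 : ℝ) else 0) / q (extProfile J K z)) + 1

set_option linter.unnecessarySeqFocus false

lemma extProfile_inj {J K : ℕ} (hJK : J ≤ K) : Function.Injective (extProfile J K) := by
  intro z z' h
  funext j
  have h2 := congrFun h ⟨j, lt_of_lt_of_le j.2 hJK⟩
  simpa [extProfile, j.2] using h2

lemma sum_sign_univ (J : ℕ) (hJ : 1 ≤ J) :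
    ∑ z : Fin J → Bool, (-1 : ℝ) ^ (wt z) = 0 := by
  have h1 : ∀ z : Fin J → Bool, (-1 : ℝ) ^ (wt z) = ∏ k, (if z k = true then (-1:ℝ) else 1) := by
    intro z
    rw [Finset.prod_ite, Finset.prod_const, Finset.prod_const, one_pow, mul_one, wt]
  simp_rw [h1]
  rw [← Fintype.piFinset_univ,
    ← Finset.prod_univ_sum (fun _ => (Finset.univ : Finset Bool))
      (fun _ b => if b = true then (-1:ℝ) else 1)]
  apply Finset.prod_eq_zero (Finset.mem_univ (⟨0, hJ⟩ : Fin J))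
  simp

lemma sum_sign (J : ℕ) (hJ : 1 ≤ J) :
    ∑ z ∈ NZ J, (-1 : ℝ) ^ (wt z + 1) = 1 := by
  have hNZ : NZ J = Finset.univ.erase (fun _ => false) := by
    rw [NZ, Finset.filter_ne']
  have h0 : ∑ z ∈ NZ J, (-1 : ℝ) ^ (wt z) = -1 := by
    have h := sum_sign_univ J hJ
    rw [← Finset.sum_erase_add Finset.univ _ (Finset.mem_univ (fun _ => false : Fin J → Bool)),
      ← hNZ] at h
    have hw : wt (fun _ => false : Fin J → Bool) = 0 := by simp [wt]
    rw [hw, pow_zero] at h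
    linarith
  simp_rw [pow_succ]
  rw [← Finset.sum_mul, h0]
  norm_num

lemma perx (J K : ℕ) (hJ : 1 ≤ J) (hJK : J ≤ K)
    (Qx : (Fin K → Bool) → ℝ) (hQnn : ∀ y, 0 ≤ Qx y)
    (qx : (Fin K → Bool) → ℝ) (hq : ∀ y, qx y = Qx y / ∑ y', Qx y')
    (hqpos : 0 < ∑ y', Qx y' → ∀ z ∈ NZ J, 0 < qx (extProfile J K z))
    (c : ℝ) :
    (∑ y, Qx y * (phiU J K qx y - c))
      = (∑ y', Qx y') * (gammaInv J K qx - c)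
    ∧ (∑ y, Qx y * (phiU J K qx y - c) ^ 2)
      = (∑ y', Qx y') * (gammaInv J K qx - c) ^ 2
        + (∑ y', Qx y') * ((gammaInv J K qx - 1) ^ 2 *
            ((∑ z ∈ NZ J, 1 / qx (extProfile J K z)) - 1)) := by
  classical
  by_cases hp : (∑ y', Qx y') = 0
  · have hQz : ∀ y, Qx y = 0 := by
      intro y
      exact (Finset.sum_eq_zero_iff_of_nonneg (fun y _ => hQnn y)).mp hp y (Finset.mem_univ y)
    constructor <;> simp [hQz, hp]
  · have hppos : 0 < ∑ y', Qx y' :=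
      lt_of_le_of_ne (Finset.sum_nonneg fun y _ => hQnn y) (Ne.symm hp)
    set p : ℝ := ∑ y', Qx y' with hpdef
    have hQeq : ∀ y, Qx y = qx y * p := by
      intro y; rw [hq]; field_simp
    set S : (Fin K → Bool) → ℝ := fun y => ∑ z ∈ NZ J, (-1 : ℝ) ^ (wt z + 1) *
        (if y = extProfile J K z then (1 : ℝ) else 0) / qx (extProfile J K z) with hSdef
    have hphi : ∀ y, phiU J K qx y = (gammaInv J K qx - 1) * S y + 1 := fun y => rfl
    -- E[S] = p
    have hQS : ∑ y, Qx y * S y = p := by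
      simp_rw [hSdef, Finset.mul_sum]
      rw [Finset.sum_comm]
      have hinner : ∀ z ∈ NZ J, (∑ y, Qx y * ((-1 : ℝ) ^ (wt z + 1) *
          (if y = extProfile J K z then (1 : ℝ) else 0) / qx (extProfile J K z)))
          = (-1 : ℝ) ^ (wt z + 1) * p := by
        intro z hz
        have hqz := hqpos hppos z hz
        have h1 : ∀ y, Qx y * ((-1 : ℝ) ^ (wt z + 1) *
            (if y = extProfile J K z then (1 : ℝ) else 0) / qx (extProfile J K z))
            = ((-1 : ℝ) ^ (wt z + 1) / qx (extProfile J K z)) *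
              (if y = extProfile J K z then Qx y else 0) := by
          intro y; by_cases h : y = extProfile J K z <;> simp [h] <;> ring
        simp_rw [h1]
        rw [← Finset.mul_sum, Finset.sum_ite_eq' Finset.univ (extProfile J K z) Qx]
        simp only [Finset.mem_univ, if_true]
        rw [hQeq (extProfile J K z)]
        field_simp
      rw [Finset.sum_congr rfl hinner, ← Finset.sum_mul, sum_sign J hJ, one_mul]
    -- E[S²] = p * T
    have hQS2 : ∑ y, Qx y * S y ^ 2 = p * ∑ z ∈ NZ J, 1 / qx (extProfile J K z) := by
      have hsq : ∀ y, S y ^ 2 = ∑ z ∈ NZ J, ∑ z' ∈ NZ J,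
          ((-1 : ℝ) ^ (wt z + 1) * (if y = extProfile J K z then (1 : ℝ) else 0) / qx (extProfile J K z)) *
          ((-1 : ℝ) ^ (wt z' + 1) * (if y = extProfile J K z' then (1 : ℝ) else 0) / qx (extProfile J K z')) := by
        intro y
        rw [sq, hSdef, Finset.sum_mul_sum]
      simp_rw [hsq, Finset.mul_sum]
      rw [Finset.sum_comm]
      have houter : ∀ z ∈ NZ J, (∑ y, ∑ z' ∈ NZ J, Qx y *
          (((-1 : ℝ) ^ (wt z + 1) * (if y = extProfile J K z then (1 : ℝ) else 0) / qx (extProfile J K z)) *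
          ((-1 : ℝ) ^ (wt z' + 1) * (if y = extProfile J K z' then (1 : ℝ) else 0) / qx (extProfile J K z'))))
          = p * (1 / qx (extProfile J K z)) := by
        intro z hz
        have hqz := hqpos hppos z hz
        rw [Finset.sum_comm]
        have hinner : ∀ z' ∈ NZ J, (∑ y, Qx y *
            (((-1 : ℝ) ^ (wt z + 1) * (if y = extProfile J K z then (1 : ℝ) else 0) / qx (extProfile J K z)) *
            ((-1 : ℝ) ^ (wt z' + 1) * (if y = extProfile J K z' then (1 : ℝ) else 0) / qx (extProfile J K z'))))
            = if z' = z then p * (1 / qx (extProfile J K z)) else 0 := by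
          intro z' hz'
          by_cases hzz : z' = z
          · subst hzz
            simp only [if_true]
            have h1 : ∀ y, Qx y *
                (((-1 : ℝ) ^ (wt z' + 1) * (if y = extProfile J K z' then (1 : ℝ) else 0) / qx (extProfile J K z')) *
                ((-1 : ℝ) ^ (wt z' + 1) * (if y = extProfile J K z' then (1 : ℝ) else 0) / qx (extProfile J K z')))
                = (1 / qx (extProfile J K z') ^ 2) * (if y = extProfile J K z' then Qx y else 0) := by
              intro y
              have hpow : ((-1:ℝ) ^ (wt z' + 1)) * ((-1:ℝ) ^ (wt z' + 1)) = 1 := by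
                rw [← pow_add]; exact Even.neg_one_pow ⟨wt z' + 1, rfl⟩
              by_cases h : y = extProfile J K z'
              · rw [if_pos h, if_pos h, mul_one, div_mul_div_comm, hpow, sq]; ring
              · simp [h]
            simp_rw [h1]
            rw [← Finset.mul_sum, Finset.sum_ite_eq' Finset.univ (extProfile J K z') Qx]
            simp only [Finset.mem_univ, if_true]
            rw [hQeq (extProfile J K z')]
            field_simp
          · rw [if_neg hzz]
            apply Finset.sum_eq_zero
            intro y _
            have hne : extProfile J K z' ≠ extProfile J K z := fun h => hzz (extProfile_inj hJK h)
            by_cases h : y = extProfile J K z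
            · have : y ≠ extProfile J K z' := by rw [h]; exact fun h2 => hne h2.symm
              simp [this]
            · simp [h]
        rw [Finset.sum_congr rfl hinner, Finset.sum_ite_eq' (NZ J) z
          (fun _ => p * (1 / qx (extProfile J K z))), if_pos hz]
      exact Finset.sum_congr rfl houter
    constructor
    · have e1 : ∑ y, Qx y * (phiU J K qx y - c)
          = (gammaInv J K qx - 1) * (∑ y, Qx y * S y) + (1 - c) * (∑ y, Qx y) := by
        rw [Finset.mul_sum, Finset.mul_sum, ← Finset.sum_add_distrib]
        refine Finset.sum_congr rfl fun y _ => ?_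
        rw [hphi]; ring
      rw [e1, hQS, ← hpdef]; ring
    · have e2 : ∑ y, Qx y * (phiU J K qx y - c) ^ 2
          = (gammaInv J K qx - 1) ^ 2 * (∑ y, Qx y * S y ^ 2)
            + (2 * (gammaInv J K qx - 1) * (1 - c)) * (∑ y, Qx y * S y)
            + (1 - c) ^ 2 * (∑ y, Qx y) := by
        rw [Finset.mul_sum, Finset.mul_sum, Finset.mul_sum, ← Finset.sum_add_distrib,
          ← Finset.sum_add_distrib]
        refine Finset.sum_congr rfl fun y _ => ?_
        rw [hphi]; ring
      rw [e2, hQS, hQS2, ← hpdef]; ring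


/-- efficiency bound: the variance of the efficient influence function is
`Var_Q(φ(X,Y)) = Var_Q(1/γ(X)) + E_Q[(1/γ(X) − 1)² (∑_{y ≠ 0} 1/q_y(X) − 1)]`,
with `Q` encoded as a probability mass function on `𝒳 × ({0,1}^K \ {0})` and variances
written as `E[·²] − (E[·])²`. -/

theorem stmt_8 (J K : ℕ) (hJ : 1 ≤ J) (hJK : J ≤ K)
    {𝒳 : Type*} [Fintype 𝒳] [DecidableEq 𝒳]
    (Q : 𝒳 → (Fin K → Bool) → ℝ)
    (hQnn : ∀ x y, 0 ≤ Q x y) (hQsum : ∑ x, ∑ y, Q x y = 1)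
    (hQ0 : ∀ x, Q x (fun _ => false) = 0)
    (q : (Fin K → Bool) → 𝒳 → ℝ)
    (hq : ∀ y x, q y x = Q x y / ∑ y', Q x y')
    (hqpos : ∀ x, 0 < ∑ y', Q x y' → ∀ z ∈ NZ J, 0 < q (extProfile J K z) x)
    (ψinv : ℝ)
    (hψinv : ψinv = ∑ x, (∑ y', Q x y') * gammaInv J K (fun y => q y x))
    (φ : 𝒳 → (Fin K → Bool) → ℝ)
    (hφ : ∀ x y, φ x y = phiU J K (fun y' => q y' x) y - ψinv) :
    (∑ x, ∑ y, Q x y * φ x y ^ 2) - (∑ x, ∑ y, Q x y * φ x y) ^ 2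
      = ((∑ x, (∑ y', Q x y') * gammaInv J K (fun y => q y x) ^ 2)
          - (∑ x, (∑ y', Q x y') * gammaInv J K (fun y => q y x)) ^ 2)
        + ∑ x, (∑ y', Q x y') *
            ((gammaInv J K (fun y => q y x) - 1) ^ 2 *
              ((∑ z ∈ NZ J, 1 / q (extProfile J K z) x) - 1)) := by
  classical
  simp only [hφ]
  have h1 : ∀ x, (∑ y, Q x y * (phiU J K (fun y' => q y' x) y - ψinv))
      = (∑ y', Q x y') * (gammaInv J K (fun y => q y x) - ψinv) := fun x =>
    (perx J K hJ hJK (Q x) (hQnn x) (fun y => q y x) (fun y => hq y x) (hqpos x) ψinv).1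
  have h2 : ∀ x, (∑ y, Q x y * (phiU J K (fun y' => q y' x) y - ψinv) ^ 2)
      = (∑ y', Q x y') * (gammaInv J K (fun y => q y x) - ψinv) ^ 2
        + (∑ y', Q x y') * ((gammaInv J K (fun y => q y x) - 1) ^ 2 *
            ((∑ z ∈ NZ J, 1 / q (extProfile J K z) x) - 1)) := fun x =>
    (perx J K hJ hJK (Q x) (hQnn x) (fun y => q y x) (fun y => hq y x) (hqpos x) ψinv).2
  have e1 : ∑ x, ∑ y, Q x y * (phiU J K (fun y' => q y' x) y - ψinv) = 0 := by
    rw [Finset.sum_congr rfl fun x _ => h1 x]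
    simp_rw [mul_sub]
    rw [Finset.sum_sub_distrib, ← hψinv, ← Finset.sum_mul, hQsum, one_mul, sub_self]
  have e2 : ∑ x, ∑ y, Q x y * (phiU J K (fun y' => q y' x) y - ψinv) ^ 2
      = (∑ x, (∑ y', Q x y') * gammaInv J K (fun y => q y x) ^ 2) - ψinv ^ 2
        + ∑ x, (∑ y', Q x y') * ((gammaInv J K (fun y => q y x) - 1) ^ 2 *
            ((∑ z ∈ NZ J, 1 / q (extProfile J K z) x) - 1)) := by
    rw [Finset.sum_congr rfl fun x _ => h2 x, Finset.sum_add_distrib]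
    congr 1
    have hx : ∀ x, (∑ y', Q x y') * (gammaInv J K (fun y => q y x) - ψinv) ^ 2
        = ((∑ y', Q x y') * gammaInv J K (fun y => q y x) ^ 2
            - 2 * ψinv * ((∑ y', Q x y') * gammaInv J K (fun y => q y x)))
          + ψinv ^ 2 * (∑ y', Q x y') := fun x => by ring
    rw [Finset.sum_congr rfl fun x _ => hx x, Finset.sum_add_distrib, Finset.sum_sub_distrib,
      ← Finset.mul_sum, ← hψinv, ← Finset.mul_sum, hQsum]
    ring
  rw [e1, e2, ← hψinv]
  ring
end

section
/- Let A be a real-valued random variable, c ∈ ℝ, and suppose there exist β > 0 and C ≥ 0 such that P( |A − c| ≤ t ) ≤ C t^β for every t ≥ 0 (the margin condition). Let B be a real-valued random variable on the same probability space and let m ≥ 0 satisfy |A − B| ≤ m almost surely. Then E[ |A − B| · 1( |A − c| ≤ |A − B| ) ] ≤ C m^{1+β}. -/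
open MeasureTheory

/-- under the margin condition `P(|A − c| ≤ t) ≤ C t^β` for all `t ≥ 0`
(with `β > 0`, `C ≥ 0`), if `|A − B| ≤ m` almost surely with `m ≥ 0`, then
`E[|A − B| · 1(|A − c| ≤ |A − B|)] ≤ C m^{1+β}`. -/
theorem stmt_16 {Ω : Type*} [MeasurableSpace Ω] (P : Measure Ω) [IsProbabilityMeasure P]
    (A B : Ω → ℝ) (hA : Measurable A) (hB : Measurable B)
    (c β C : ℝ) (hβ : 0 < β) (hC : 0 ≤ C)
    (hmargin : ∀ t : ℝ, 0 ≤ t → (P {ω | |A ω - c| ≤ t}).toReal ≤ C * t ^ β)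
    (m : ℝ) (hm : 0 ≤ m) (hAB : ∀ᵐ ω ∂P, |A ω - B ω| ≤ m) :
    ∫ ω, |A ω - B ω| * (if |A ω - c| ≤ |A ω - B ω| then (1 : ℝ) else 0) ∂P
      ≤ C * m ^ (1 + β) := by
  rcases eq_or_lt_of_le hm with hm0 | hm0
  · have h0 : ∀ᵐ ω ∂P,
        |A ω - B ω| * (if |A ω - c| ≤ |A ω - B ω| then (1 : ℝ) else 0) = 0 := by
      filter_upwards [hAB] with ω h
      have hz : |A ω - B ω| = 0 := le_antisymm (hm0 ▸ h) (abs_nonneg _)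
      simp [hz]
    rw [integral_congr_ae h0, integral_zero, ← hm0,
      Real.zero_rpow (by positivity), mul_zero]
  · set S : Set Ω := {ω | |A ω - c| ≤ m} with hSdef
    have hS : MeasurableSet S :=
      measurableSet_le (hA.sub measurable_const).abs measurable_const
    have hfg : ∀ᵐ ω ∂P,
        |A ω - B ω| * (if |A ω - c| ≤ |A ω - B ω| then (1 : ℝ) else 0)
          ≤ S.indicator (fun _ => m) ω := by
      filter_upwards [hAB] with ω h
      by_cases hcase : |A ω - c| ≤ |A ω - B ω|
      · rw [if_pos hcase, mul_one]
        have hωS : ω ∈ S := le_trans hcase h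
        rw [Set.indicator_of_mem hωS]
        exact h
      · rw [if_neg hcase, mul_zero]
        exact Set.indicator_nonneg (fun _ _ => hm) ω
    have hint_g : Integrable (S.indicator (fun _ => m)) P :=
      (integrable_const m).indicator hS
    have hT : MeasurableSet {ω | |A ω - c| ≤ |A ω - B ω|} :=
      measurableSet_le (hA.sub measurable_const).abs (hA.sub hB).abs
    have hf_meas : Measurable
        (fun ω => |A ω - B ω| * (if |A ω - c| ≤ |A ω - B ω| then (1 : ℝ) else 0)) :=
      (hA.sub hB).abs.mul (Measurable.ite hT measurable_const measurable_const)
    have hint_f : Integrable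
        (fun ω => |A ω - B ω| * (if |A ω - c| ≤ |A ω - B ω| then (1 : ℝ) else 0)) P := by
      refine (integrable_const m).mono' hf_meas.aestronglyMeasurable ?_
      filter_upwards [hAB] with ω h
      rw [Real.norm_eq_abs, abs_mul]
      by_cases hcase : |A ω - c| ≤ |A ω - B ω|
      · rw [if_pos hcase]; simpa [abs_abs] using h
      · rw [if_neg hcase]; simpa using hm
    calc ∫ ω, |A ω - B ω| * (if |A ω - c| ≤ |A ω - B ω| then (1 : ℝ) else 0) ∂P
        ≤ ∫ ω, S.indicator (fun _ => m) ω ∂P := integral_mono_ae hint_f hint_g hfg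
      _ = (P S).toReal * m := by rw [integral_indicator_const _ hS, smul_eq_mul]; rfl
      _ ≤ (C * m ^ β) * m := mul_le_mul_of_nonneg_right (hmargin m hm) hm
      _ = C * m ^ (1 + β) := by
          rw [Real.rpow_add hm0, Real.rpow_one]; ring
end

section
/- Let K ≥ 2 and let p : {0,1}^K → (0, ∞). Define α_1 := ∑_{y ∈ {0,1}^K} (−1)^{K + |y|} log p(y), where |y| is the number of ones of y, and for each c ∈ {0,1}^{K−2} define the conditional odds ratio OR(c) := p(1,1,c) p(0,0,c) / ( p(1,0,c) p(0,1,c) ), where (a,b,c) denotes the vector with first two coordinates a, b and remaining coordinates c. Then exp( (−1)^K α_1 ) = ( ∏_{y : |y| even} p(y) ) / ( ∏_{y : |y| odd} p(y) ) = ( ∏_{c : |c| even} OR(c) ) / ( ∏_{c : |c| odd} OR(c) ). -/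
open Finset

/-- The vector in `{0,1}^K` whose first two coordinates are `a, b` and whose
remaining `K − 2` coordinates are given by `c`. -/
def cat2 {K : ℕ} (hK : 2 ≤ K) (a b : Bool) (c : Fin (K - 2) → Bool) : Fin K → Bool :=
  fun i =>
    if h0 : (i : ℕ) = 0 then a
    else if h1 : (i : ℕ) = 1 then b
    else c ⟨(i : ℕ) - 2, by have := i.isLt; omega⟩

lemma wt_cat2 {m : ℕ} (h : 2 ≤ m + 2) (a b : Bool) (c : Fin m → Bool) :
    wt (cat2 (K := m + 2) h a b c)
      = (if a then 1 else 0) + (if b then 1 else 0) + wt c := by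
  unfold wt
  rw [Finset.card_filter, Finset.card_filter, Fin.sum_univ_succ, Fin.sum_univ_succ]
  have h0 : cat2 (K := m + 2) h a b c 0 = a := by simp [cat2]
  have h1 : cat2 (K := m + 2) h a b c (0 : Fin (m+1)).succ = b := by simp [cat2]
  have h2 : ∀ i : Fin m, cat2 (K := m + 2) h a b c i.succ.succ = c i := by
    intro i
    simp only [cat2, Fin.val_succ]
    rw [dif_neg (by omega), dif_neg (by omega)]
    exact congrArg c (Fin.ext (by simp))
  rw [h0, h1]
  simp only [h2]
  rw [add_assoc]

def splitEquiv (m : ℕ) : (Bool × Bool × (Fin m → Bool)) ≃ (Fin (m + 2) → Bool) where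
  toFun x := cat2 (by omega) x.1 x.2.1 x.2.2
  invFun y := (y 0, y 1, fun j => y ⟨(j : ℕ) + 2, by omega⟩)
  left_inv := by
    rintro ⟨a, b, c⟩
    refine Prod.ext ?_ (Prod.ext ?_ ?_)
    · simp [cat2]
    · simp [cat2]
    · funext j
      simp only [cat2]
      rw [dif_neg (by omega), dif_neg (by omega)]
      exact congrArg c (Fin.ext (by simp))
  right_inv := by
    intro y
    funext i
    simp only [cat2]
    split_ifs with h0 h1
    · exact congrArg y (Fin.ext (by simp [h0]))
    · exact congrArg y (Fin.ext (by simp [h1]))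
    · exact congrArg y (Fin.ext (by simp; omega))

/-- for `K ≥ 2` and positive `p : {0,1}^K → (0,∞)`, the highest-order
interaction coefficient `α₁ = ∑_y (−1)^{K+|y|} log p(y)` satisfies
`exp((−1)^K α₁) = (∏_{|y| even} p(y))/(∏_{|y| odd} p(y))
              = (∏_{|c| even} OR(c))/(∏_{|c| odd} OR(c))`,
where `OR(c) = p(1,1,c)p(0,0,c)/(p(1,0,c)p(0,1,c))`. -/
theorem stmt_19 (K : ℕ) (hK : 2 ≤ K) (p : (Fin K → Bool) → ℝ) (hp : ∀ y, 0 < p y)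
    (α₁ : ℝ) (hα₁ : α₁ = ∑ y : Fin K → Bool, (-1 : ℝ) ^ (K + wt y) * Real.log (p y))
    (OR : (Fin (K - 2) → Bool) → ℝ)
    (hOR : ∀ c, OR c = p (cat2 hK true true c) * p (cat2 hK false false c)
      / (p (cat2 hK true false c) * p (cat2 hK false true c))) :
    Real.exp ((-1 : ℝ) ^ K * α₁)
        = (∏ y ∈ Finset.univ.filter (fun y : Fin K → Bool => Even (wt y)), p y)
          / (∏ y ∈ Finset.univ.filter (fun y : Fin K → Bool => Odd (wt y)), p y) ∧
    Real.exp ((-1 : ℝ) ^ K * α₁)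
        = (∏ c ∈ Finset.univ.filter (fun c : Fin (K - 2) → Bool => Even (wt c)), OR c)
          / (∏ c ∈ Finset.univ.filter (fun c : Fin (K - 2) → Bool => Odd (wt c)), OR c) := by
  obtain ⟨m, rfl⟩ : ∃ m, K = m + 2 := ⟨K - 2, by omega⟩
  have hfilter : ∀ (n : ℕ), (Finset.univ.filter (fun y : Fin n → Bool => ¬ Even (wt y)))
      = Finset.univ.filter (fun y => Odd (wt y)) := by
    intro n
    ext y
    simp [Nat.not_even_iff_odd]
  set A := ∏ y ∈ Finset.univ.filter (fun y : Fin (m+2) → Bool => Even (wt y)), p y with hAdef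
  set B := ∏ y ∈ Finset.univ.filter (fun y : Fin (m+2) → Bool => Odd (wt y)), p y with hBdef
  have hA : 0 < A := Finset.prod_pos fun y _ => hp y
  have hB : 0 < B := Finset.prod_pos fun y _ => hp y
  -- Part 1
  have key1 : Real.exp ((-1 : ℝ) ^ (m+2) * α₁) = A / B := by
    have hsum : (-1 : ℝ) ^ (m+2) * α₁ = Real.log A - Real.log B := by
      rw [hα₁, Finset.mul_sum]
      have hterm : ∀ y : Fin (m+2) → Bool,
          (-1 : ℝ) ^ (m+2) * ((-1 : ℝ) ^ (m+2 + wt y) * Real.log (p y))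
            = if Even (wt y) then Real.log (p y) else -Real.log (p y) := by
        intro y
        have hpow : (-1 : ℝ) ^ (m+2) * (-1 : ℝ) ^ (m+2 + wt y) = (-1 : ℝ) ^ (wt y) := by
          rw [← pow_add]
          have h2 : (m+2) + (m+2 + wt y) = 2 * (m+2) + wt y := by ring
          rw [h2, pow_add, pow_mul]
          norm_num
        rw [← mul_assoc, hpow]
        by_cases h : Even (wt y)
        · rw [if_pos h, h.neg_one_pow, one_mul]
        · rw [if_neg h, (Nat.not_even_iff_odd.mp h).neg_one_pow, neg_one_mul]
      rw [Finset.sum_congr rfl fun y _ => hterm y, Finset.sum_ite, hfilter,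
        Finset.sum_neg_distrib, hAdef, hBdef,
        Real.log_prod (fun y _ => (hp y).ne'),
        Real.log_prod (fun y _ => (hp y).ne'), sub_eq_add_neg]
    rw [hsum, ← Real.log_div hA.ne' hB.ne', Real.exp_log (div_pos hA hB)]
  refine ⟨key1, ?_⟩
  rw [key1]
  -- Part 2
  set g : (Fin (m+2) → Bool) → ℝ := fun y => if Even (wt y) then p y else (p y)⁻¹ with hg
  have hAB : A / B = ∏ y : Fin (m+2) → Bool, g y := by
    rw [hg, Finset.prod_ite, hfilter, Finset.prod_inv_distrib, div_eq_mul_inv, hAdef, hBdef]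
  set f : (Fin m → Bool) → ℝ := fun c => if Even (wt c) then OR c else (OR c)⁻¹ with hf
  have hfg : ∀ c : Fin m → Bool,
      (g (cat2 hK true true c) * g (cat2 hK true false c)) *
        (g (cat2 hK false true c) * g (cat2 hK false false c)) = f c := by
    intro c
    have w1 : wt (cat2 hK true true c) = 2 + wt c := by rw [wt_cat2]; norm_num
    have w2 : wt (cat2 hK false true c) = 1 + wt c := by rw [wt_cat2]; norm_num
    have w3 : wt (cat2 hK true false c) = 1 + wt c := by rw [wt_cat2]; norm_num
    have w4 : wt (cat2 hK false false c) = wt c := by rw [wt_cat2]; norm_num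
    have e1 : Even (wt (cat2 hK true true c)) ↔ Even (wt c) := by
      rw [w1, Nat.even_add]; norm_num
    have e2 : Even (wt (cat2 hK false true c)) ↔ ¬ Even (wt c) := by
      rw [w2, Nat.even_add]; simp
    have e3 : Even (wt (cat2 hK true false c)) ↔ ¬ Even (wt c) := by
      rw [w3, Nat.even_add]; simp
    have e4 : Even (wt (cat2 hK false false c)) ↔ Even (wt c) := by rw [w4]
    have h1 := (hp (cat2 hK true true c)).ne'
    have h2 := (hp (cat2 hK false true c)).ne'
    have h3 := (hp (cat2 hK true false c)).ne'
    have h4 := (hp (cat2 hK false false c)).ne'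
    simp only [hg, hf]
    by_cases h : Even (wt c)
    · rw [if_pos (e1.mpr h), if_neg (by rw [e3]; exact not_not_intro h),
        if_neg (by rw [e2]; exact not_not_intro h), if_pos (e4.mpr h), if_pos h, hOR c]
      field_simp
    · rw [if_neg (fun hh => h (e1.mp hh)), if_pos (e3.mpr h), if_pos (e2.mpr h),
        if_neg (fun hh => h (e4.mp hh)), if_neg h, hOR c]
      rw [inv_div]
      field_simp
  have hbij : ∏ y : Fin (m+2) → Bool, g y = ∏ c : Fin m → Bool, f c := by
    rw [← Fintype.prod_equiv (splitEquiv m)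
      (fun x : Bool × Bool × (Fin m → Bool) => g (cat2 hK x.1 x.2.1 x.2.2)) g (fun x => rfl)]
    rw [show (∏ x : Bool × Bool × (Fin m → Bool), g (cat2 hK x.1 x.2.1 x.2.2))
        = ∏ a : Bool, ∏ b : Bool, ∏ c : Fin m → Bool, g (cat2 hK a b c) from by
      rw [Fintype.prod_prod_type]
      exact Finset.prod_congr rfl fun a _ => Fintype.prod_prod_type _]
    rw [Fintype.prod_bool, Fintype.prod_bool, Fintype.prod_bool,
      ← Finset.prod_mul_distrib, ← Finset.prod_mul_distrib, ← Finset.prod_mul_distrib]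
    exact Finset.prod_congr rfl fun c _ => hfg c
  have hfprod : (∏ c : Fin m → Bool, f c)
      = (∏ c ∈ Finset.univ.filter (fun c : Fin m → Bool => Even (wt c)), OR c)
        / (∏ c ∈ Finset.univ.filter (fun c : Fin m → Bool => Odd (wt c)), OR c) := by
    rw [hf, Finset.prod_ite, hfilter, Finset.prod_inv_distrib, div_eq_mul_inv]
  rw [hAB, hbij, hfprod]
  rfl
end
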